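/- Every subgraph G of Q_n with average degree d contains two vertices at Hamming distance at least d apart. -/

import Mathlib

open SimpleGraph Finset
open scoped symmDiff

/-- The hypercube `Q_n` on vertex set `{0,1}^n`: two vertices are adjacent iff they
differ in exactly one coordinate. -/
def Q (n : ℕ) : SimpleGraph (Fin n → Bool) where
  Adj x y := hammingDist x y = 1
  symm := ⟨fun x y h => (hammingDist_comm y x).trans h⟩
  loopless := ⟨fun x h => by simp at h⟩

/-- The coordinate direction of a step from `x` to `y` (for an edge of `Q n`, the unique
coordinate where they differ), as a natural number. -/
def dir {n : ℕ} (x y : Fin n → Bool) : ℕ :=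
  (Finset.univ.filter fun i => x i ≠ y i).sup fun i => (i : ℕ)

/-- The list of coordinate directions of the edges of a walk in `Q n`. -/
def dirs {n : ℕ} {u v : Fin n → Bool} (p : (Q n).Walk u v) : List ℕ :=
  p.darts.map fun d => dir d.fst d.snd

/-- A geodesic in `Q n`: a path no two of whose edges lie in the same coordinate
direction. -/
def IsGeodesic {n : ℕ} {u v : Fin n → Bool} (p : (Q n).Walk u v) : Prop :=
  p.IsPath ∧ (dirs p).Nodup

/-- An increasing geodesic in `Q n`: a path whose successive edge directions strictly
increase. -/
def IsIncGeodesic {n : ℕ} {u v : Fin n → Bool} (p : (Q n).Walk u v) : Prop :=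
  p.IsPath ∧ (dirs p).Chain' (· < ·)

/-- `maxInc G x` is the maximum length of an increasing geodesic contained in the
subgraph `G` of `Q n` and ending at the vertex `x`. -/
noncomputable def maxInc {n : ℕ} (G : (Q n).Subgraph) (x : Fin n → Bool) : ℕ :=
  sSup {l | ∃ u, ∃ p : (Q n).Walk u x, p.toSubgraph ≤ G ∧ IsIncGeodesic p ∧ p.length = l}

section Aux

variable {n : ℕ}

def qflip (i : Fin n) (x : Fin n → Bool) : Fin n → Bool := Function.update x i (!x i)

lemma qflip_self (i : Fin n) (x : Fin n → Bool) : qflip i x i = !x i := by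
  simp [qflip]

lemma qflip_ne (i j : Fin n) (x : Fin n → Bool) (h : j ≠ i) : qflip i x j = x j := by
  simp [qflip, Function.update_of_ne h]

lemma qflip_qflip (i : Fin n) (x : Fin n → Bool) : qflip i (qflip i x) = x := by
  funext j
  by_cases h : j = i
  · subst h; simp [qflip]
  · rw [qflip_ne _ _ _ h, qflip_ne _ _ _ h]

lemma hd_eq (x y : Fin n → Bool) :
    hammingDist x y = (Finset.univ.filter fun i => x i ≠ y i).card := rfl

lemma filter_qflip_eq (i : Fin n) (x : Fin n → Bool) :
    (Finset.univ.filter fun j => x j ≠ qflip i x j) = {i} := by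
  ext j
  simp only [mem_filter, mem_univ, true_and, mem_singleton]
  by_cases hj : j = i
  · subst hj
    rw [qflip_self]
    cases x j <;> simp
  · rw [qflip_ne _ _ _ hj]
    simp [hj]

lemma q_adj_iff {x y : Fin n → Bool} : (Q n).Adj x y ↔ ∃ i, y = qflip i x := by
  constructor
  · intro h
    have h' : (Finset.univ.filter fun i => x i ≠ y i).card = 1 := h
    obtain ⟨i, hi⟩ := Finset.card_eq_one.mp h'
    refine ⟨i, funext fun j => ?_⟩
    by_cases hj : j = i
    · subst hj
      have hmem : j ∈ Finset.univ.filter fun i => x i ≠ y i := by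
        rw [hi]; exact mem_singleton_self j
      have : x j ≠ y j := by simpa using hmem
      rw [qflip_self]
      cases hxj : x j <;> cases hyj : y j <;> simp_all
    · have : x j = y j := by
        by_contra hne
        have hmem : j ∈ Finset.univ.filter fun i => x i ≠ y i :=
          mem_filter.mpr ⟨mem_univ _, hne⟩
        rw [hi] at hmem
        exact hj (mem_singleton.mp hmem)
      rw [qflip_ne _ _ _ hj]
      exact this.symm
  · rintro ⟨i, rfl⟩
    show hammingDist x (qflip i x) = 1
    rw [hd_eq, filter_qflip_eq, card_singleton]

lemma dir_qflip (i : Fin n) (x : Fin n → Bool) : dir x (qflip i x) = (i : ℕ) := by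
  unfold dir
  rw [filter_qflip_eq]
  exact Finset.sup_singleton

lemma dir_lt_of_adj {x y : Fin n → Bool} (h : (Q n).Adj x y) : dir x y < n := by
  obtain ⟨i, rfl⟩ := q_adj_iff.mp h
  rw [dir_qflip]
  exact i.isLt

lemma dirs_nil {v : Fin n → Bool} : dirs (SimpleGraph.Walk.nil : (Q n).Walk v v) = [] := rfl

lemma dirs_cons {u w v : Fin n → Bool} (h : (Q n).Adj u w) (p : (Q n).Walk w v) :
    dirs (SimpleGraph.Walk.cons h p) = dir u w :: dirs p := rfl

lemma eq_of_not_mem_dirs {u v : Fin n → Bool} (p : (Q n).Walk u v) (j : Fin n)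
    (hj : (j : ℕ) ∉ dirs p) : u j = v j := by
  induction p with
  | nil => rfl
  | @cons u w v h p ih =>
    rw [dirs_cons] at hj
    simp only [List.mem_cons, not_or] at hj
    obtain ⟨i, rfl⟩ := q_adj_iff.mp h
    have hji : j ≠ i := by
      intro e
      exact hj.1 (by subst e; rw [dir_qflip])
    rw [← ih hj.2, qflip_ne _ _ _ hji]

lemma hammingDist_eq_length {u v : Fin n → Bool} (p : (Q n).Walk u v)
    (hnd : (dirs p).Nodup) : hammingDist u v = p.length := by
  induction p with
  | nil => simp
  | @cons u w v h p ih =>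
    rw [dirs_cons, List.nodup_cons] at hnd
    obtain ⟨hni, hnd⟩ := hnd
    obtain ⟨i, rfl⟩ := q_adj_iff.mp h
    rw [dir_qflip] at hni
    have hiv : qflip i u i = v i := eq_of_not_mem_dirs p i hni
    have hset : (Finset.univ.filter fun j => u j ≠ v j)
        = insert i (Finset.univ.filter fun j => (qflip i u) j ≠ v j) := by
      ext j
      simp only [mem_filter, mem_univ, true_and, mem_insert]
      by_cases hj : j = i
      · subst hj
        rw [← hiv, qflip_self]
        constructor
        · intro _; exact Or.inl rfl
        · intro _; cases u j <;> simp
      · rw [qflip_ne _ _ _ hj]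
        simp [hj]
    have hnotmem : i ∉ (Finset.univ.filter fun j => (qflip i u) j ≠ v j) := by
      simp [hiv]
    rw [SimpleGraph.Walk.length_cons, hd_eq, hset, card_insert_of_notMem hnotmem,
      ← hd_eq, ih hnd]

end Aux

section Graph

variable {n : ℕ}

def WS (G : (Q n).Subgraph) (k : ℕ) (v : Fin n → Bool) : Set ℕ :=
  {l | ∃ w, ∃ p : (Q n).Walk v w, p.toSubgraph ≤ G ∧ (dirs p).Chain' (· > ·) ∧
    (∀ m ∈ dirs p, m < k) ∧ p.length = l}

noncomputable def ff (G : (Q n).Subgraph) (k : ℕ) (v : Fin n → Bool) : ℕ := sSup (WS G k v)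

lemma le_n_of_mem_WS {G : (Q n).Subgraph} {k : ℕ} {v : Fin n → Bool} {l : ℕ}
    (hl : l ∈ WS G k v) : l ≤ n := by
  obtain ⟨w, p, -, hc, -, rfl⟩ := hl
  have hnd : (dirs p).Nodup := (List.isChain_iff_pairwise.mp hc).imp ne_of_gt
  calc p.length = (dirs p).length := by simp [dirs, SimpleGraph.Walk.length_darts]
    _ = (dirs p).toFinset.card := (List.toFinset_card_of_nodup hnd).symm
    _ ≤ (Finset.range n).card := by
        apply Finset.card_le_card
        intro m hm
        rw [List.mem_toFinset] at hm
        rw [Finset.mem_range]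
        obtain ⟨d, -, rfl⟩ := List.mem_map.mp hm
        exact dir_lt_of_adj d.adj
    _ = n := Finset.card_range n

lemma bddAbove_WS (G : (Q n).Subgraph) (k : ℕ) (v : Fin n → Bool) : BddAbove (WS G k v) :=
  ⟨n, fun _ hl => le_n_of_mem_WS hl⟩

lemma zero_mem_WS {G : (Q n).Subgraph} {v : Fin n → Bool} (k : ℕ) (hv : v ∈ G.verts) :
    0 ∈ WS G k v := by
  refine ⟨v, SimpleGraph.Walk.nil, ?_, by rw [dirs_nil]; exact List.isChain_nil, by simp [dirs_nil], rfl⟩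
  simpa [SimpleGraph.Walk.toSubgraph] using (SimpleGraph.singletonSubgraph_le_iff v G).mpr hv

lemma ff_mono (G : (Q n).Subgraph) {k m : ℕ} (hkm : k ≤ m) (v : Fin n → Bool) :
    ff G k v ≤ ff G m v := by
  rcases Set.eq_empty_or_nonempty (WS G k v) with he | hne
  · rw [ff, he, csSup_empty]; exact bot_le
  · refine csSup_le_csSup (bddAbove_WS G m v) hne ?_
    rintro l ⟨w, p, h1, h2, h3, h4⟩
    exact ⟨w, p, h1, h2, fun a ha => lt_of_lt_of_le (h3 a ha) hkm, h4⟩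

lemma ff_eq_zero {G : (Q n).Subgraph} {v : Fin n → Bool} (k : ℕ) (hv : v ∉ G.verts) :
    ff G k v = 0 := by
  have h : WS G k v = ∅ := by
    ext l
    simp only [Set.mem_empty_iff_false, iff_false]
    rintro ⟨w, p, hle, -, -, -⟩
    exact hv (hle.1 p.start_mem_verts_toSubgraph)
  rw [ff, h, csSup_empty]; rfl

lemma ff_step {G : (Q n).Subgraph} {v : Fin n → Bool} (i : Fin n)
    (hadj : G.Adj v (qflip i v)) :
    ff G i (qflip i v) + 1 ≤ ff G ((i : ℕ) + 1) v := by
  have hv' : qflip i v ∈ G.verts := G.edge_vert hadj.symm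
  have hne : (WS G i (qflip i v)).Nonempty := ⟨0, zero_mem_WS _ hv'⟩
  obtain ⟨w, p, hle, hch, hlt, hlen⟩ := Nat.sSup_mem hne (bddAbove_WS G i (qflip i v))
  have hQ : (Q n).Adj v (qflip i v) := G.adj_sub hadj
  refine le_csSup (bddAbove_WS G _ v) ⟨w, SimpleGraph.Walk.cons hQ p, ?_, ?_, ?_, ?_⟩
  · simp only [SimpleGraph.Walk.toSubgraph]
    exact sup_le (SimpleGraph.subgraphOfAdj_le_of_adj G hadj) hle
  · rw [dirs_cons]; apply List.isChain_cons.mpr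
    refine ⟨fun y hy => ?_, hch⟩
    have hym : y ∈ dirs p := List.mem_of_mem_head? hy
    rw [dir_qflip]
    exact hlt y hym
  · rw [dirs_cons]
    intro m hm
    rcases List.mem_cons.mp hm with rfl | hm
    · rw [dir_qflip]; omega
    · have := hlt m hm; omega
  · rw [SimpleGraph.Walk.length_cons, hlen]; rfl

end Graph

/-- (Feder–Subi) Every subgraph `G` of `Q n` of average degree `d` contains two
vertices at Hamming distance at least `d`. -/
theorem stmt4 (n : ℕ) (G : (Q n).Subgraph) (d : ℝ) (hne : G.verts.Nonempty)
    (hd : d = 2 * G.edgeSet.ncard / G.verts.ncard) :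
    ∃ u ∈ G.verts, ∃ v ∈ G.verts, d ≤ hammingDist u v := by

  classical
  set V : Finset (Fin n → Bool) := G.verts.toFinset with hV
  set A : Fin n → Finset (Fin n → Bool) :=
    (fun i => Finset.univ.filter fun u => G.Adj u (qflip i u)) with hA
  have hmemA : ∀ (i : Fin n) u, u ∈ A i ↔ G.Adj u (qflip i u) := by
    intro i u; simp [hA]
  -- step inequality
  have step : ∀ i : Fin n, (∑ v, ff G i v) + (A i).card ≤ ∑ v, ff G ((i : ℕ) + 1) v := by
    intro i
    have hinv : Function.Involutive (qflip i) := qflip_qflip i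
    have hre : ∑ u ∈ A i, ff G i (qflip i u) = ∑ u ∈ A i, ff G i u := by
      apply Finset.sum_equiv hinv.toPerm
      · intro u
        simp only [Function.Involutive.coe_toPerm, hmemA, qflip_qflip]
        exact ⟨fun h => h.symm, fun h => h.symm⟩
      · intro u _
        simp only [Function.Involutive.coe_toPerm]
    have hext : ∀ u ∈ A i, ff G i (qflip i u) + 1 ≤ ff G ((i : ℕ) + 1) u := by
      intro u hu
      exact ff_step i ((hmemA i u).mp hu)
    have h2 : (∑ u ∈ A i, ff G i u) + (A i).card ≤ ∑ u ∈ A i, ff G ((i : ℕ) + 1) u := by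
      rw [← hre, Finset.card_eq_sum_ones, ← Finset.sum_add_distrib]
      exact Finset.sum_le_sum hext
    have h1 : ∑ u ∈ Finset.univ \ A i, ff G i u
        ≤ ∑ u ∈ Finset.univ \ A i, ff G ((i : ℕ) + 1) u :=
      Finset.sum_le_sum fun u _ => ff_mono G (Nat.le_succ _) u
    have hs1 := Finset.sum_sdiff (f := ff G (i : ℕ)) (Finset.subset_univ (A i))
    have hs2 := Finset.sum_sdiff (f := ff G ((i : ℕ) + 1)) (Finset.subset_univ (A i))
    omega
  -- telescoping
  have main : ∀ k : ℕ,
      (∑ i ∈ Finset.univ.filter (fun i : Fin n => (i : ℕ) < k), (A i).card)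
        ≤ ∑ v, ff G k v := by
    intro k
    induction k with
    | zero => simp
    | succ k ih =>
      by_cases hk : k < n
      · have hins : Finset.univ.filter (fun i : Fin n => (i : ℕ) < k + 1)
            = insert ⟨k, hk⟩ (Finset.univ.filter fun i : Fin n => (i : ℕ) < k) := by
          ext j
          simp only [mem_filter, mem_univ, true_and, mem_insert, Fin.ext_iff]
          omega
        rw [hins, Finset.sum_insert (by simp)]
        have hstep : (∑ v, ff G k v) + (A ⟨k, hk⟩).card ≤ ∑ v, ff G (k + 1) v :=
          step ⟨k, hk⟩
        omega
      · have hfe : Finset.univ.filter (fun i : Fin n => (i : ℕ) < k + 1)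
            = Finset.univ.filter (fun i : Fin n => (i : ℕ) < k) := by
          ext j
          have := j.isLt
          simp only [mem_filter, mem_univ, true_and]
          omega
        rw [hfe]
        exact ih.trans (Finset.sum_le_sum fun v _ => ff_mono G (Nat.le_succ _) v)
  have main_n : (∑ i : Fin n, (A i).card) ≤ ∑ v, ff G n v := by
    have hall : Finset.univ.filter (fun i : Fin n => (i : ℕ) < n) = Finset.univ := by
      ext j; simp [j.isLt]
    have := main n
    rwa [hall] at this
  -- edge count
  have hdeg : ∀ u, (Finset.univ.filter fun i : Fin n => G.Adj u (qflip i u)).card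
      = G.spanningCoe.degree u := by
    intro u
    rw [SimpleGraph.degree, SimpleGraph.neighborFinset_eq_filter]
    apply Finset.card_bij (fun i _ => qflip i u)
    · intro i hi
      simp only [mem_filter, mem_univ, true_and] at hi ⊢
      exact hi
    · intro i₁ h₁ i₂ h₂ heq
      by_contra hne12
      have h1 := congrFun heq i₁
      rw [qflip_self, qflip_ne _ _ _ hne12] at h1
      cases u i₁ <;> simp_all
    · intro v hv
      simp only [mem_filter, mem_univ, true_and] at hv
      obtain ⟨i, rfl⟩ := q_adj_iff.mp (G.adj_sub hv)
      exact ⟨i, mem_filter.mpr ⟨mem_univ _, hv⟩, rfl⟩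
  have hAsum : ∑ i : Fin n, (A i).card = 2 * G.edgeSet.ncard := by
    have hswap : ∑ i : Fin n, (A i).card
        = ∑ u, (Finset.univ.filter fun i : Fin n => G.Adj u (qflip i u)).card := by
      simp only [hA, Finset.card_filter]
      exact Finset.sum_comm
    rw [hswap]
    simp only [hdeg]
    rw [SimpleGraph.sum_degrees_eq_twice_card_edges]
    congr 1
    have hE : G.spanningCoe.edgeSet = G.edgeSet := by
      ext e
      induction e using Sym2.ind with
      | _ x y => exact Iff.rfl
    have h1 : G.spanningCoe.edgeFinset.card = G.spanningCoe.edgeSet.ncard := by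
      rw [Set.ncard_eq_toFinset_card']
      congr 1
    rw [h1, hE]
  -- restrict to V
  have hVsum : ∑ v ∈ V, ff G n v = ∑ v, ff G n v := by
    apply Finset.sum_subset (Finset.subset_univ V)
    intro v _ hv
    exact ff_eq_zero n (by simpa [hV, Set.mem_toFinset] using hv)
  have hVne : V.Nonempty := by
    obtain ⟨v, hv⟩ := hne
    exact ⟨v, by simpa [hV, Set.mem_toFinset] using hv⟩
  have hVcard : V.card = G.verts.ncard := (Set.ncard_eq_toFinset_card' _).symm
  have hEsum : (2 * (G.edgeSet.ncard : ℝ)) ≤ ∑ v ∈ V, (ff G n v : ℝ) := by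
    have h : 2 * G.edgeSet.ncard ≤ ∑ v ∈ V, ff G n v := by
      rw [hVsum, ← hAsum]; exact main_n
    calc (2 * (G.edgeSet.ncard : ℝ)) = ((2 * G.edgeSet.ncard : ℕ) : ℝ) := by push_cast; ring
      _ ≤ ((∑ v ∈ V, ff G n v : ℕ) : ℝ) := by exact_mod_cast h
      _ = ∑ v ∈ V, (ff G n v : ℝ) := by push_cast; rfl
  have hdsum : ∑ _v ∈ V, d ≤ ∑ v ∈ V, (ff G n v : ℝ) := by
    rw [Finset.sum_const, nsmul_eq_mul, hVcard, hd]
    have hN : (0 : ℝ) < G.verts.ncard := by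
      have : 0 < G.verts.ncard := (Set.ncard_pos (Set.toFinite _)).mpr hne
      exact_mod_cast this
    have heq : (G.verts.ncard : ℝ) * (2 * G.edgeSet.ncard / G.verts.ncard)
        = 2 * G.edgeSet.ncard := by
      field_simp
    rw [heq]
    exact hEsum
  obtain ⟨v, hvV, hdv⟩ := Finset.exists_le_of_sum_le hVne hdsum
  have hvG : v ∈ G.verts := by simpa [hV, Set.mem_toFinset] using hvV
  obtain ⟨w, p, hle, hch, -, hlen⟩ :=
    Nat.sSup_mem ⟨0, zero_mem_WS n hvG⟩ (bddAbove_WS G n v)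
  have hwG : w ∈ G.verts := hle.1 p.end_mem_verts_toSubgraph
  refine ⟨v, hvG, w, hwG, ?_⟩
  have hnd : (dirs p).Nodup := (List.isChain_iff_pairwise.mp hch).imp ne_of_gt
  have hdist : hammingDist v w = p.length := hammingDist_eq_length p hnd
  rw [hdist, hlen]
  exact hdv
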